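/- Let $\tau, \eta \in \mathbb{Z}^n$, $w \in S_n$, and suppose $\eta - \tau \in \mathbb{Z}\alpha^\vee$ for some positive root $\alpha = \varepsilon_i - \varepsilon_j$ ($i < j$) of $S_n$, and that $w\alpha$ is a positive root. Then $\tau \le \eta$ in the Bruhat order on $\mathbb{Z}^n$ if and only if $w\tau \le w\eta$. -/

import Mathlib

theorem Equiv.Perm.apply_inv_self {α : Type*} (f : Equiv.Perm α) (x : α) : f (f⁻¹ x) = x :=
  f.apply_symm_apply x

theorem Equiv.Perm.inv_apply_self {α : Type*} (f : Equiv.Perm α) (x : α) : f⁻¹ (f x) = x :=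
  f.symm_apply_apply x


/-- An element `t_τ ∘ u` of the extended affine Weyl group `W = Sₙ ⋉ ℤⁿ`
of type `A_{n-1}`:  `perm` is the finite part `u ∈ Sₙ`, `tr` the translation `τ`. -/
structure AffW (n : ℕ) where
  perm : Equiv.Perm (Fin n)
  tr : Fin n → ℤ

namespace AffW

variable {n : ℕ}

/-- The affine action on `X = ℤⁿ` : `(t_τ u)(x) = u·x + τ` where `(u·x)_i = x_{u⁻¹ i}`. -/
def act (w : AffW n) (x : Fin n → ℤ) : Fin n → ℤ :=
  fun i => x (w.perm⁻¹ i) + w.tr i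

/-- Group multiplication (composition of affine maps). -/
def mul (a b : AffW n) : AffW n :=
  ⟨a.perm * b.perm, fun i => b.tr (a.perm⁻¹ i) + a.tr i⟩

def one (n : ℕ) : AffW n := ⟨1, 0⟩

/-- An affine root `ε_i - ε_j + k`, recorded as the data `(i, j, k)`. -/
abbrev Root (n : ℕ) := Fin n × Fin n × ℤ

/-- A positive affine root: `Δ⁺ = Δ_f⁺ ∪ (Δ_f + ℤ_{>0})`. -/
def IsPos (α : Root n) : Prop := 0 < α.2.2 ∨ (α.2.2 = 0 ∧ α.1 < α.2.1)

/-- A negative affine root. -/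
def IsNeg (α : Root n) : Prop := IsPos (α.2.1, α.1, -α.2.2)

/-- Action of `w` on affine roots, determined by `(wα)(x) = α(w⁻¹x)`. -/
def rootAct (w : AffW n) (α : Root n) : Root n :=
  (w.perm α.1, w.perm α.2.1, α.2.2 - w.tr (w.perm α.1) + w.tr (w.perm α.2.1))

/-- The length `ℓ(w) = #{α ∈ Δ⁺ ∣ wα ∈ -Δ⁺}`. -/
noncomputable def len (w : AffW n) : ℕ :=
  Set.ncard {α : Root n | IsPos α ∧ IsNeg (rootAct w α)}

/-- The affine reflection `s_{ε_i - ε_j + k}` as an element of `W`. -/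
def refl (i j : Fin n) (k : ℤ) : AffW n :=
  ⟨Equiv.swap i j, fun m => if m = i then -k else if m = j then k else 0⟩

/-- Bruhat covering-type relation: right multiplication by a reflection which
increases the length. -/
def BruhatStep (a b : AffW n) : Prop :=
  (∃ i j k, i ≠ j ∧ b = mul a (refl i j k)) ∧ len a < len b

/-- The Bruhat order on the extended affine Weyl group. -/
def BruhatLe : AffW n → AffW n → Prop := Relation.ReflTransGen BruhatStep

/-- `m_τ`, the shortest element of the coset `t_τ Sₙ`. -/
noncomputable def minRep (τ : Fin n → ℤ) : AffW n :=
  ⟨(Finset.exists_min_image (Finset.univ : Finset (Equiv.Perm (Fin n)))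
      (fun u => len (⟨u, τ⟩ : AffW n)) ⟨1, Finset.mem_univ 1⟩).choose, τ⟩

/-- The Bruhat order on `X = ℤⁿ` induced from the extended affine Weyl group:
`τ ≤ η ↔ m_τ ≤ m_η`. -/
noncomputable def XLe (τ η : Fin n → ℤ) : Prop := BruhatLe (minRep τ) (minRep η)

end AffW
namespace AffW
variable {n : ℕ}

/-! ### Basic root lemmas -/

def nroot (γ : Root n) : Root n := (γ.2.1, γ.1, -γ.2.2)

lemma isNeg_iff {γ : Root n} : IsNeg γ ↔ IsPos (nroot γ) := Iff.rfl

lemma nroot_nroot (γ : Root n) : nroot (nroot γ) = γ := by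
  simp [nroot]

lemma isPos_nroot_iff {γ : Root n} : IsPos (nroot γ) ↔ IsNeg γ := Iff.rfl

lemma isNeg_nroot_iff {γ : Root n} : IsNeg (nroot γ) ↔ IsPos γ := by
  rw [isNeg_iff, nroot_nroot]

lemma not_isPos_and_isNeg {γ : Root n} (h : IsPos γ) (h' : IsNeg γ) : False := by
  obtain ⟨P, Q, K⟩ := γ
  rcases h with h | ⟨h1, h2⟩ <;> rcases h' with h' | ⟨h1', h2'⟩ <;>
    simp_all [IsPos, IsNeg] <;> omega

lemma isPos_or_isNeg {γ : Root n} (hd : γ.1 ≠ γ.2.1) : IsPos γ ∨ IsNeg γ := by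
  obtain ⟨P, Q, K⟩ := γ
  simp only [IsPos, IsNeg]
  rcases lt_trichotomy P Q with h | h | h
  · rcases lt_trichotomy K 0 with hk | rfl | hk
    · right; left; omega
    · left; right; exact ⟨rfl, h⟩
    · left; left; exact hk
  · exact absurd h hd
  · rcases lt_trichotomy K 0 with hk | rfl | hk
    · right; left; omega
    · right; right; exact ⟨by omega, h⟩
    · left; left; exact hk

lemma isNeg_of_not_isPos {γ : Root n} (hd : γ.1 ≠ γ.2.1) (h : ¬ IsPos γ) : IsNeg γ :=
  (isPos_or_isNeg hd).resolve_left h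

lemma isPos_of_not_isNeg {γ : Root n} (hd : γ.1 ≠ γ.2.1) (h : ¬ IsNeg γ) : IsPos γ :=
  (isPos_or_isNeg hd).resolve_right h

/-! ### rootAct basics -/

lemma rootAct_mul (a b : AffW n) (γ : Root n) :
    rootAct (mul a b) γ = rootAct a (rootAct b γ) := by
  obtain ⟨P, Q, K⟩ := γ
  obtain ⟨u, s⟩ := a
  obtain ⟨v, t⟩ := b
  simp only [rootAct, mul]
  refine Prod.ext rfl (Prod.ext rfl ?_)
  simp only [mul_inv_rev, Equiv.Perm.mul_apply, Equiv.Perm.inv_apply_self]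
  ring

lemma rootAct_one (γ : Root n) : rootAct (one n) γ = γ := by
  obtain ⟨P, Q, K⟩ := γ
  simp [rootAct, one]

lemma rootAct_nroot (a : AffW n) (γ : Root n) :
    rootAct a (nroot γ) = nroot (rootAct a γ) := by
  obtain ⟨P, Q, K⟩ := γ
  simp only [rootAct, nroot]
  refine Prod.ext rfl (Prod.ext rfl ?_)
  ring

lemma rootAct_fst_ne {a : AffW n} {γ : Root n} (h : γ.1 ≠ γ.2.1) :
    (rootAct a γ).1 ≠ (rootAct a γ).2.1 := by
  simpa [rootAct] using h

/-- inverse element -/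
def invA (a : AffW n) : AffW n := ⟨a.perm⁻¹, fun m => -(a.tr (a.perm m))⟩

lemma invA_mul (a : AffW n) : mul (invA a) a = one n := by
  obtain ⟨u, t⟩ := a
  simp only [mul, invA, one]
  congr 1
  · simp
  · funext m
    simp

lemma rootAct_invA_rootAct (a : AffW n) (γ : Root n) :
    rootAct (invA a) (rootAct a γ) = γ := by
  rw [← rootAct_mul, invA_mul, rootAct_one]

lemma rootAct_injective (a : AffW n) : Function.Injective (rootAct a) := by
  intro x y h
  have := congrArg (rootAct (invA a)) h
  rwa [rootAct_invA_rootAct, rootAct_invA_rootAct] at this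

end AffW
namespace AffW
variable {n : ℕ}

/-! ### invSet and finiteness -/

def invSet (a : AffW n) : Set (Root n) := {γ | IsPos γ ∧ IsNeg (rootAct a γ)}

lemma len_eq (a : AffW n) : len a = (invSet a).ncard := rfl

lemma mem_invSet_offdiag {a : AffW n} {γ : Root n} (h : γ ∈ invSet a) :
    γ.1 ≠ γ.2.1 := by
  obtain ⟨P, Q, K⟩ := γ
  intro heq
  simp only at heq
  subst heq
  obtain ⟨h1, h2⟩ := h
  simp only [IsPos, lt_irrefl, and_false, or_false] at h1
  have h2' : IsPos ((rootAct a (P, P, K)).2.1, (rootAct a (P, P, K)).1,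
      -(rootAct a (P, P, K)).2.2) := h2
  simp only [rootAct, IsPos, lt_irrefl, and_false, or_false] at h2'
  omega

lemma invSet_finite (a : AffW n) : (invSet a).Finite := by
  classical
  refine Set.Finite.subset (Finset.finite_toSet
    (Finset.univ ×ˢ Finset.univ ×ˢ
      Finset.Icc (-(2 * ∑ m : Fin n, |a.tr m|)) (2 * ∑ m : Fin n, |a.tr m|))) ?_
  rintro ⟨P, Q, K⟩ ⟨h1, h2⟩
  have h2' : IsPos ((rootAct a (P, Q, K)).2.1, (rootAct a (P, Q, K)).1,
      -(rootAct a (P, Q, K)).2.2) := h2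
  simp only [rootAct, IsPos] at h1 h2'
  have hP : |a.tr (a.perm P)| ≤ ∑ m : Fin n, |a.tr m| :=
    Finset.single_le_sum (f := fun m => |a.tr m|) (fun i _ => abs_nonneg _)
      (Finset.mem_univ (a.perm P))
  have hQ : |a.tr (a.perm Q)| ≤ ∑ m : Fin n, |a.tr m| :=
    Finset.single_le_sum (f := fun m => |a.tr m|) (fun i _ => abs_nonneg _)
      (Finset.mem_univ (a.perm Q))
  have hP1 : a.tr (a.perm P) ≤ |a.tr (a.perm P)| := le_abs_self _
  have hQ1 : -(a.tr (a.perm Q)) ≤ |a.tr (a.perm Q)| := neg_le_abs _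
  simp only [Finset.coe_product, Set.mem_prod, Finset.mem_coe, Finset.mem_univ,
    Finset.mem_Icc, true_and]
  refine ⟨?_, ?_⟩ <;> rcases h1 with h1 | ⟨h1, _⟩ <;> rcases h2' with h2'' | ⟨h2'', _⟩ <;> omega

/-! ### reflection basics -/

lemma refl_comm {p q : Fin n} (hpq : p ≠ q) (c : ℤ) : refl q p (-c) = refl p q c := by
  simp only [refl, Equiv.swap_comm q p]
  congr 1
  funext m
  rcases eq_or_ne m p with rfl | h1
  · simp [hpq]
  · rcases eq_or_ne m q with rfl | h2
    · simp [Ne.symm hpq]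
    · simp [h1, h2]

lemma mul_refl_refl (a : AffW n) {p q : Fin n} (hpq : p ≠ q) (c : ℤ) :
    mul (mul a (refl p q c)) (refl p q c) = a := by
  obtain ⟨u, t⟩ := a
  simp only [mul, refl]
  congr 1
  · rw [mul_assoc, Equiv.swap_mul_self, mul_one]
  · funext m
    simp only [mul_inv_rev, Equiv.Perm.mul_apply]
    have hsw : ∀ x : Fin n,
        ((if (Equiv.swap p q) x = p then -c else if (Equiv.swap p q) x = q then c else 0) : ℤ)
          = -(if x = p then -c else if x = q then c else 0) := by
      intro x
      by_cases h1 : x = p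
      · subst h1; simp [Equiv.swap_apply_left, hpq, Ne.symm hpq]
      · by_cases h2 : x = q
        · subst h2; simp [Equiv.swap_apply_right, hpq, (Ne.symm hpq)]
        · simp [Equiv.swap_apply_of_ne_of_ne h1 h2, h1, h2]
    have : ((Equiv.swap p q)⁻¹ : Equiv.Perm (Fin n)) = Equiv.swap p q := by
      simp
    rw [this, hsw (u⁻¹ m)]
    ring

lemma rootAct_refl_self {p q : Fin n} (hpq : p ≠ q) (c : ℤ) :
    rootAct (refl p q c) (p, q, c) = nroot (p, q, c) := by
  simp only [rootAct, refl, nroot, Equiv.swap_apply_left, Equiv.swap_apply_right]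
  have h1 : (q ≠ p) := Ne.symm hpq
  simp [hpq, h1]

/-! ### the linear functional -/

def vec (γ : Root n) : (Fin n → ℤ) × ℤ :=
  (fun m => (if m = γ.1 then 1 else 0) - (if m = γ.2.1 then 1 else 0), γ.2.2)

def hfun (v : (Fin n → ℤ) × ℤ) : ℤ := (n + 1) * v.2 - ∑ m : Fin n, (m : ℤ) * v.1 m

def ht (γ : Root n) : ℤ := hfun (vec γ)

lemma sum_coe_mul_ind (P : Fin n) : ∑ m : Fin n, (m : ℤ) * (if m = P then 1 else 0) = P := by
  rw [Finset.sum_eq_single P] <;> simp +contextual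

lemma ht_eq (γ : Root n) : ht γ = (n + 1) * γ.2.2 + ((γ.2.1 : ℤ) - (γ.1 : ℤ)) := by
  obtain ⟨P, Q, K⟩ := γ
  simp only [ht, hfun, vec, mul_sub, Finset.sum_sub_distrib, sum_coe_mul_ind]
  ring

lemma ht_mk (P Q : Fin n) (K : ℤ) : ht (P, Q, K) = (n + 1) * K + ((Q : ℤ) - (P : ℤ)) :=
  ht_eq _

lemma ht_pos {γ : Root n} (h : IsPos γ) : 0 < ht γ := by
  obtain ⟨P, Q, K⟩ := γ
  rw [ht_mk]
  have hP : (P : ℤ) < n := by exact_mod_cast P.isLt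
  have hQ : (0 : ℤ) ≤ (Q : ℤ) := by positivity
  rcases h with h | ⟨h1, h2⟩
  · simp only at h
    have h2 : (n + 1 : ℤ) * 1 ≤ (n + 1) * K :=
      mul_le_mul_of_nonneg_left (by omega) (by positivity)
    omega
  · have h3 : (P : ℤ) < (Q : ℤ) := by exact_mod_cast h2
    simp only at h1
    subst h1
    omega

lemma vec_nroot (γ : Root n) : vec (nroot γ) = -vec γ := by
  obtain ⟨P, Q, K⟩ := γ
  simp only [vec, nroot, Prod.neg_mk]
  refine Prod.ext ?_ rfl
  funext m
  simp only [Pi.neg_apply]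
  exact (neg_sub (α := ℤ) _ _).symm

lemma ht_nroot (γ : Root n) : ht (nroot γ) = -ht γ := by
  rw [ht_eq, ht_eq]
  obtain ⟨P, Q, K⟩ := γ
  simp only [nroot]
  ring

lemma ht_neg {γ : Root n} (h : IsNeg γ) : ht γ < 0 := by
  have := ht_pos (γ := nroot γ) h
  rw [ht_nroot] at this
  omega

lemma isPos_of_ht {γ : Root n} (hd : γ.1 ≠ γ.2.1) (h : 0 < ht γ) : IsPos γ := by
  rcases isPos_or_isNeg hd with h' | h'
  · exact h'
  · exact absurd (ht_neg h') (by omega)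

/-! ### vec of rootAct -/

def Wmap (a : AffW n) (v : (Fin n → ℤ) × ℤ) : (Fin n → ℤ) × ℤ :=
  (fun m => v.1 (a.perm⁻¹ m), v.2 - ∑ m : Fin n, a.tr m * v.1 (a.perm⁻¹ m))

lemma vec_rootAct (a : AffW n) (γ : Root n) : vec (rootAct a γ) = Wmap a (vec γ) := by
  obtain ⟨P, Q, K⟩ := γ
  have key : ∀ x : Fin n, ∀ m : Fin n, ((if a.perm⁻¹ m = x then (1:ℤ) else 0))
      = (if m = a.perm x then 1 else 0) := by
    intro x m
    congr 1
    simp only [eq_iff_iff]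
    constructor
    · intro h; rw [← h]; simp
    · intro h; rw [h]; simp
  refine Prod.ext ?_ ?_
  · funext m
    simp only [vec, rootAct, Wmap, key]
    rfl
  · simp only [vec, rootAct, Wmap, mul_sub, Finset.sum_sub_distrib]
    have h1 : ∑ m : Fin n, a.tr m * (if a.perm⁻¹ m = P then (1:ℤ) else 0)
        = a.tr (a.perm P) := by
      simp only [key]
      rw [Finset.sum_eq_single (a.perm P)] <;> simp +contextual
    have h2 : ∑ m : Fin n, a.tr m * (if a.perm⁻¹ m = Q then (1:ℤ) else 0)
        = a.tr (a.perm Q) := by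
      simp only [key]
      rw [Finset.sum_eq_single (a.perm Q)] <;> simp +contextual
    rw [h1, h2]
    ring

lemma Wmap_comb (a : AffW n) (c : ℤ) (x y : (Fin n → ℤ) × ℤ) :
    Wmap a (c • x - y) = c • Wmap a x - Wmap a y := by
  refine Prod.ext ?_ ?_
  · funext m
    simp only [Wmap, Prod.fst_sub, Prod.smul_fst, Pi.sub_apply, Pi.smul_apply, smul_eq_mul]
  · simp only [Wmap, Prod.fst_sub, Prod.snd_sub, Prod.smul_fst, Prod.smul_snd,
      Pi.sub_apply, Pi.smul_apply, smul_eq_mul]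
    have hterm : ∀ m : Fin n, a.tr m * (c * x.1 (a.perm⁻¹ m) - y.1 (a.perm⁻¹ m))
        = c * (a.tr m * x.1 (a.perm⁻¹ m)) - a.tr m * y.1 (a.perm⁻¹ m) := fun m => by ring
    rw [Finset.sum_congr rfl (fun m _ => hterm m), Finset.sum_sub_distrib, ← Finset.mul_sum]
    ring

end AffW
namespace AffW
variable {n : ℕ}

lemma one_mul' (b : AffW n) : mul (one n) b = b := by
  obtain ⟨v, t⟩ := b
  simp [mul, one]

lemma refl_refl_eq_one {p q : Fin n} (hpq : p ≠ q) (c : ℤ) :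
    mul (refl p q c) (refl p q c) = one n := by
  have h := mul_refl_refl (one n) hpq c
  rwa [one_mul'] at h

lemma rootAct_refl_refl {p q : Fin n} (hpq : p ≠ q) (c : ℤ) (γ : Root n) :
    rootAct (refl p q c) (rootAct (refl p q c) γ) = γ := by
  rw [← rootAct_mul, refl_refl_eq_one hpq, rootAct_one]

/-! ### the key reflection formula -/

lemma vec_rootAct_refl {p q : Fin n} (hpq : p ≠ q) (c : ℤ) (γ : Root n) :
    vec (rootAct (refl p q c) γ)
      = vec γ - ((vec γ).1 p - (vec γ).1 q) • vec (p, q, c) := by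
  obtain ⟨P, Q, K⟩ := γ
  have hqp : q ≠ p := Ne.symm hpq
  rcases eq_or_ne p P with rfl | hPp
  · rcases eq_or_ne p Q with rfl | hQp
    · -- A1 : P = Q = p
      refine Prod.ext (funext fun m => ?_) ?_ <;>
        simp only [vec, AffW.refl, rootAct, Prod.fst_sub, Prod.smul_fst, Prod.snd_sub,
          Prod.smul_snd, Pi.sub_apply, Pi.smul_apply, smul_eq_mul,
          Equiv.swap_apply_left, Equiv.swap_apply_right, 
          hpq, hqp, if_true, if_false, eq_self_iff_true] <;>
        ring
    · rcases eq_or_ne q Q with rfl | hQq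
      · -- A2 : P = p, Q = q
        refine Prod.ext (funext fun m => ?_) ?_ <;>
          simp only [vec, AffW.refl, rootAct, Prod.fst_sub, Prod.smul_fst, Prod.snd_sub,
            Prod.smul_snd, Pi.sub_apply, Pi.smul_apply, smul_eq_mul,
            Equiv.swap_apply_left, Equiv.swap_apply_right, 
            hpq, hqp, if_true, if_false, eq_self_iff_true] <;>
          ring
      · -- A3 : P = p, Q off
        have hQp' : Q ≠ p := Ne.symm hQp
        have hQq' : Q ≠ q := Ne.symm hQq
        have hswQ : Equiv.swap p q Q = Q := Equiv.swap_apply_of_ne_of_ne hQp' hQq'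
        refine Prod.ext (funext fun m => ?_) ?_ <;>
          simp only [vec, AffW.refl, rootAct, Prod.fst_sub, Prod.smul_fst, Prod.snd_sub,
            Prod.smul_snd, Pi.sub_apply, Pi.smul_apply, smul_eq_mul,
            Equiv.swap_apply_left, Equiv.swap_apply_right, hswQ,
            hQp, hQq, hQp', hQq', hpq, hqp, if_true, if_false, eq_self_iff_true] <;>
          ring
  · rcases eq_or_ne q P with rfl | hPq
    · rcases eq_or_ne p Q with rfl | hQp
      · -- B1 : P = q, Q = p
        refine Prod.ext (funext fun m => ?_) ?_ <;>
          simp only [vec, AffW.refl, rootAct, Prod.fst_sub, Prod.smul_fst, Prod.snd_sub,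
            Prod.smul_snd, Pi.sub_apply, Pi.smul_apply, smul_eq_mul,
            Equiv.swap_apply_left, Equiv.swap_apply_right, 
            hpq, hqp, if_true, if_false, eq_self_iff_true] <;>
          ring
      · rcases eq_or_ne q Q with rfl | hQq
        · -- B2 : P = q, Q = q
          refine Prod.ext (funext fun m => ?_) ?_ <;>
            simp only [vec, AffW.refl, rootAct, Prod.fst_sub, Prod.smul_fst, Prod.snd_sub,
              Prod.smul_snd, Pi.sub_apply, Pi.smul_apply, smul_eq_mul,
              Equiv.swap_apply_left, Equiv.swap_apply_right, 
              hpq, hqp, if_true, if_false, eq_self_iff_true] <;>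
            ring
        · -- B3 : P = q, Q off
          have hQp' : Q ≠ p := Ne.symm hQp
          have hQq' : Q ≠ q := Ne.symm hQq
          have hswQ : Equiv.swap p q Q = Q := Equiv.swap_apply_of_ne_of_ne hQp' hQq'
          refine Prod.ext (funext fun m => ?_) ?_ <;>
            simp only [vec, AffW.refl, rootAct, Prod.fst_sub, Prod.smul_fst, Prod.snd_sub,
              Prod.smul_snd, Pi.sub_apply, Pi.smul_apply, smul_eq_mul,
              Equiv.swap_apply_left, Equiv.swap_apply_right, hswQ,
              hQp, hQq, hQp', hQq', hpq, hqp, if_true, if_false, eq_self_iff_true] <;>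
            ring
    · have hPp' : P ≠ p := Ne.symm hPp
      have hPq' : P ≠ q := Ne.symm hPq
      have hswP : Equiv.swap p q P = P := Equiv.swap_apply_of_ne_of_ne hPp' hPq'
      rcases eq_or_ne p Q with rfl | hQp
      · -- C1 : P off, Q = p
        refine Prod.ext (funext fun m => ?_) ?_ <;>
          simp only [vec, AffW.refl, rootAct, Prod.fst_sub, Prod.smul_fst, Prod.snd_sub,
            Prod.smul_snd, Pi.sub_apply, Pi.smul_apply, smul_eq_mul,
            Equiv.swap_apply_left, Equiv.swap_apply_right, hswP,
            hPp, hPq, hPp', hPq', hpq, hqp, if_true, if_false, eq_self_iff_true] <;>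
          ring
      · rcases eq_or_ne q Q with rfl | hQq
        · -- C2 : P off, Q = q
          refine Prod.ext (funext fun m => ?_) ?_ <;>
            simp only [vec, AffW.refl, rootAct, Prod.fst_sub, Prod.smul_fst, Prod.snd_sub,
              Prod.smul_snd, Pi.sub_apply, Pi.smul_apply, smul_eq_mul,
              Equiv.swap_apply_left, Equiv.swap_apply_right, hswP,
              hPp, hPq, hPp', hPq', hpq, hqp, if_true, if_false, eq_self_iff_true] <;>
            ring
        · -- C3 : both off
          have hQp' : Q ≠ p := Ne.symm hQp
          have hQq' : Q ≠ q := Ne.symm hQq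
          have hswQ : Equiv.swap p q Q = Q := Equiv.swap_apply_of_ne_of_ne hQp' hQq'
          refine Prod.ext (funext fun m => ?_) ?_ <;>
            simp only [vec, AffW.refl, rootAct, Prod.fst_sub, Prod.smul_fst, Prod.snd_sub,
              Prod.smul_snd, Pi.sub_apply, Pi.smul_apply, smul_eq_mul,
              Equiv.swap_apply_left, Equiv.swap_apply_right, hswP, hswQ,
              hPp, hPq, hPp', hPq', hQp, hQq, hQp', hQq', hpq, hqp, if_true, if_false, eq_self_iff_true] <;>
            ring

lemma hfun_sub_smul (x y : (Fin n → ℤ) × ℤ) (d : ℤ) :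
    hfun (x - d • y) = hfun x - d * hfun y := by
  simp only [hfun, Prod.snd_sub, Prod.smul_snd, Prod.fst_sub, Prod.smul_fst,
    Pi.sub_apply, Pi.smul_apply, smul_eq_mul]
  have hterm : ∀ m : Fin n, (m : ℤ) * (x.1 m - d * y.1 m)
      = (m : ℤ) * x.1 m - d * ((m : ℤ) * y.1 m) := fun m => by ring
  rw [Finset.sum_congr rfl fun m _ => hterm m, Finset.sum_sub_distrib, ← Finset.mul_sum]
  ring

lemma hfun_smul_sub (x y : (Fin n → ℤ) × ℤ) (d : ℤ) :
    hfun (d • x - y) = d * hfun x - hfun y := by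
  simp only [hfun, Prod.snd_sub, Prod.smul_snd, Prod.fst_sub, Prod.smul_fst,
    Pi.sub_apply, Pi.smul_apply, smul_eq_mul]
  have hterm : ∀ m : Fin n, (m : ℤ) * (d * x.1 m - y.1 m)
      = d * ((m : ℤ) * x.1 m) - (m : ℤ) * y.1 m := fun m => by ring
  rw [Finset.sum_congr rfl fun m _ => hterm m, Finset.sum_sub_distrib, ← Finset.mul_sum]
  ring

lemma pairing_one {p q : Fin n} (hpq : p ≠ q) {c : ℤ} (hβ : IsPos ((p, q, c) : Root n))
    {γ : Root n} (hγ : γ ∈ invSet (refl p q c)) :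
    1 ≤ (vec γ).1 p - (vec γ).1 q := by
  obtain ⟨hγp, hγn⟩ := hγ
  have h1 : ht (rootAct (refl p q c) γ)
      = ht γ - ((vec γ).1 p - (vec γ).1 q) * ht ((p, q, c) : Root n) := by
    unfold ht
    rw [vec_rootAct_refl hpq, hfun_sub_smul]
  have h2 := ht_pos hγp
  have h3 := ht_neg hγn
  have h4 := ht_pos hβ
  by_contra hcon
  push_neg at hcon
  have h5 : ((vec γ).1 p - (vec γ).1 q) * ht ((p, q, c) : Root n) ≤ 0 :=
    mul_nonpos_of_nonpos_of_nonneg (by omega) (le_of_lt h4)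
  omega

lemma nroot_fst_ne {γ : Root n} (h : γ.1 ≠ γ.2.1) : (nroot γ).1 ≠ (nroot γ).2.1 :=
  Ne.symm h

lemma isPos_rootAct_phi {p q : Fin n} (hpq : p ≠ q) {c : ℤ}
    (hβ : IsPos ((p, q, c) : Root n)) (a : AffW n)
    (haβ : IsPos (rootAct a ((p, q, c) : Root n))) {γ : Root n}
    (hγ : γ ∈ invSet (refl p q c)) (hγa : IsNeg (rootAct a γ)) :
    IsPos (rootAct a (nroot (rootAct (refl p q c) γ))) := by
  set r := refl p q c with hr
  set d := (vec γ).1 p - (vec γ).1 q with hd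
  have hvec : vec (nroot (rootAct r γ)) = d • vec ((p, q, c) : Root n) - vec γ := by
    rw [vec_nroot, vec_rootAct_refl hpq, neg_sub]
  have h2 : ht (rootAct a (nroot (rootAct r γ)))
      = d * ht (rootAct a ((p, q, c) : Root n)) - ht (rootAct a γ) := by
    unfold ht
    rw [vec_rootAct, hvec, Wmap_comb, ← vec_rootAct, ← vec_rootAct, hfun_smul_sub]
  have hd1 : 1 ≤ d := pairing_one hpq hβ hγ
  have hA := ht_pos haβ
  have hB := ht_neg hγa
  have hdA : ht (rootAct a ((p, q, c) : Root n))
      ≤ d * ht (rootAct a ((p, q, c) : Root n)) := le_mul_of_one_le_left (le_of_lt hA) hd1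
  have hpos : 0 < ht (rootAct a (nroot (rootAct r γ))) := by omega
  have hdγ : γ.1 ≠ γ.2.1 := mem_invSet_offdiag hγ
  exact isPos_of_ht (rootAct_fst_ne (nroot_fst_ne (rootAct_fst_ne hdγ))) hpos

/-! ### the step lemma -/

lemma len_lt_of_pos (a : AffW n) {p q : Fin n} {c : ℤ} (hpq : p ≠ q)
    (hβ : IsPos ((p, q, c) : Root n)) (haβ : IsPos (rootAct a ((p, q, c) : Root n))) :
    len a < len (mul a (refl p q c)) := by
  classical
  set r := refl p q c with hr
  set β : Root n := (p, q, c) with hβdef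
  set φ : Root n → Root n := fun γ => nroot (rootAct r γ) with hφ
  have hrr : ∀ γ : Root n, rootAct r (rootAct r γ) = γ := rootAct_refl_refl hpq c
  have hφφ : ∀ γ, φ (φ γ) = γ := by
    intro γ
    simp only [hφ]
    rw [rootAct_nroot, nroot_nroot, hrr]
  have hφinj : Function.Injective φ := by
    intro x y h
    have := congrArg φ h
    rwa [hφφ, hφφ] at this
  have hfinT := invSet_finite (mul a r)
  have hfinA := invSet_finite r
  have hfina := invSet_finite a
  set M : Set (Root n) := {γ | IsPos γ ∧ IsNeg (rootAct r γ) ∧ IsNeg (rootAct a γ)}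
    with hM
  have hMA : M ⊆ invSet r := fun γ h => ⟨h.1, h.2.1⟩
  have hMa : M ⊆ invSet a := fun γ h => ⟨h.1, h.2.2⟩
  set T1 : Set (Root n) :=
    {γ | IsPos γ ∧ IsPos (rootAct r γ) ∧ IsNeg (rootAct a (rootAct r γ))} with hT1
  set T2 : Set (Root n) :=
    {γ | IsPos γ ∧ IsNeg (rootAct r γ) ∧ IsNeg (rootAct a (rootAct r γ))} with hT2
  have hsplit : invSet (mul a r) = T1 ∪ T2 := by
    ext γ
    constructor
    · intro h
      obtain ⟨h1, h2⟩ := h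
      have hdγ : γ.1 ≠ γ.2.1 := mem_invSet_offdiag ⟨h1, h2⟩
      rw [rootAct_mul] at h2
      rcases isPos_or_isNeg (rootAct_fst_ne (a := r) hdγ) with hp | hn
      · exact Or.inl ⟨h1, hp, h2⟩
      · exact Or.inr ⟨h1, hn, h2⟩
    · rintro (⟨h1, _, h3⟩ | ⟨h1, _, h3⟩) <;>
        exact ⟨h1, by rw [rootAct_mul]; exact h3⟩
  have hT1sub : T1 ⊆ invSet (mul a r) := by
    rw [hsplit]; exact Set.subset_union_left
  have hT2sub : T2 ⊆ invSet (mul a r) := by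
    rw [hsplit]; exact Set.subset_union_right
  have hdisj : Disjoint T1 T2 := by
    rw [Set.disjoint_left]
    rintro γ ⟨_, h2, _⟩ ⟨_, h2', _⟩
    exact not_isPos_and_isNeg h2 h2'
  -- T1 count
  have himg1 : rootAct r '' T1 = invSet a \ M := by
    ext δ
    constructor
    · rintro ⟨γ, ⟨h1, h2, h3⟩, rfl⟩
      refine ⟨⟨h2, h3⟩, ?_⟩
      intro hMmem
      have := hMmem.2.1
      rw [hrr] at this
      exact not_isPos_and_isNeg h1 this
    · rintro ⟨⟨h1, h2⟩, hnM⟩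
      refine ⟨rootAct r δ, ⟨?_, ?_, ?_⟩, hrr δ⟩
      · have hdδ : δ.1 ≠ δ.2.1 := mem_invSet_offdiag ⟨h1, h2⟩
        rcases isPos_or_isNeg (rootAct_fst_ne (a := r) hdδ) with hp | hn
        · exact hp
        · exact absurd ⟨h1, hn, h2⟩ hnM
      · rw [hrr]; exact h1
      · rw [hrr]; exact h2
  have hc1 : T1.ncard = (invSet a \ M).ncard := by
    rw [← himg1, Set.ncard_image_of_injective _ (rootAct_injective r)]
  have hsplita : (invSet a \ M).ncard + M.ncard = (invSet a).ncard := by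
    have hu : (invSet a \ M) ∪ M = invSet a := Set.diff_union_of_subset hMa
    conv_rhs => rw [← hu]
    rw [Set.ncard_union_eq Set.disjoint_sdiff_left hfina.diff (hfina.subset hMa)]
  -- T2 count
  set Aplus : Set (Root n) := {γ | γ ∈ invSet r ∧ IsPos (rootAct a γ)} with hApl
  have hApsub : Aplus ⊆ invSet r := fun γ h => h.1
  have himg2 : φ '' T2 = Aplus := by
    ext δ
    constructor
    · rintro ⟨γ, ⟨h1, h2, h3⟩, rfl⟩
      refine ⟨⟨h2, ?_⟩, ?_⟩
      · show IsNeg (rootAct r (φ γ))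
        simp only [hφ]
        rw [rootAct_nroot, hrr, isNeg_nroot_iff]
        exact h1
      · show IsPos (rootAct a (φ γ))
        simp only [hφ]
        rw [rootAct_nroot, isPos_nroot_iff]
        exact h3
    · rintro ⟨⟨h1, h2⟩, h3⟩
      refine ⟨φ δ, ⟨?_, ?_, ?_⟩, hφφ δ⟩
      · simp only [hφ]
        exact h2
      · simp only [hφ]
        rw [rootAct_nroot, hrr, isNeg_nroot_iff]
        exact h1
      · simp only [hφ]
        rw [rootAct_nroot, rootAct_nroot, hrr, isNeg_nroot_iff]
        exact h3
  have hc2 : T2.ncard = Aplus.ncard := by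
    rw [← himg2, Set.ncard_image_of_injective _ hφinj]
  have hApM : Aplus = invSet r \ M := by
    ext γ
    constructor
    · rintro ⟨⟨h1, h2⟩, h3⟩
      exact ⟨⟨h1, h2⟩, fun hMm => not_isPos_and_isNeg h3 hMm.2.2⟩
    · rintro ⟨⟨h1, h2⟩, hnM⟩
      refine ⟨⟨h1, h2⟩, ?_⟩
      have hdγ : γ.1 ≠ γ.2.1 := mem_invSet_offdiag ⟨h1, h2⟩
      rcases isPos_or_isNeg (rootAct_fst_ne (a := a) hdγ) with hp | hn
      · exact hp
      · exact absurd ⟨h1, h2, hn⟩ hnM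
  have hsplitA : (invSet r \ M).ncard + M.ncard = (invSet r).ncard := by
    have hu : (invSet r \ M) ∪ M = invSet r := Set.diff_union_of_subset hMA
    conv_rhs => rw [← hu]
    rw [Set.ncard_union_eq Set.disjoint_sdiff_left hfinA.diff (hfinA.subset hMA)]
  -- the bound #M + 1 ≤ #Aplus
  have hβmem : β ∈ Aplus := by
    refine ⟨⟨hβ, ?_⟩, haβ⟩
    rw [hβdef, rootAct_refl_self hpq, isNeg_iff, nroot_nroot]
    exact hβ
  have hφM : φ '' M ⊆ Aplus := by
    rintro δ ⟨γ, hγM, rfl⟩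
    refine ⟨⟨?_, ?_⟩, ?_⟩
    · simp only [hφ]; exact hγM.2.1
    · simp only [hφ]
      rw [rootAct_nroot, hrr, isNeg_nroot_iff]
      exact hγM.1
    · exact isPos_rootAct_phi hpq hβ a haβ ⟨hγM.1, hγM.2.1⟩ hγM.2.2
  have hβnot : β ∉ φ '' M := by
    rintro ⟨γ, hγM, hfix⟩
    have hγβ : γ = φ β := by rw [← hfix, hφφ]
    have hφβ : φ β = β := by
      simp only [hφ]
      rw [hβdef, rootAct_refl_self hpq, nroot_nroot]
    rw [hφβ] at hγβ
    subst hγβ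
    exact not_isPos_and_isNeg haβ hγM.2.2
  have hMfin := hfinA.subset hMA
  have hApfin := hfinA.subset hApsub
  have hmb : M.ncard + 1 ≤ Aplus.ncard := by
    have hsub : φ '' M ∪ {β} ⊆ Aplus := by
      rw [Set.union_subset_iff]
      exact ⟨hφM, by simpa using hβmem⟩
    have hcard : (φ '' M ∪ {β}).ncard = M.ncard + 1 := by
      rw [Set.ncard_union_eq (Set.disjoint_singleton_right.mpr hβnot)
        (hMfin.image φ) (Set.finite_singleton β),
        Set.ncard_image_of_injective _ hφinj, Set.ncard_singleton]
    rw [← hcard]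
    exact Set.ncard_le_ncard hsub hApfin
  -- assemble
  have hlen2 : len (mul a r) = T1.ncard + T2.ncard := by
    rw [len_eq, hsplit,
      Set.ncard_union_eq hdisj (hfinT.subset hT1sub) (hfinT.subset hT2sub)]
  have hlena : len a = (invSet a).ncard := len_eq a
  omega

end AffW
namespace AffW
variable {n : ℕ}

/-! ### consequences of the step lemma -/

lemma len_gt_of_neg (a : AffW n) {p q : Fin n} {c : ℤ} (hpq : p ≠ q)
    (hβ : IsPos ((p, q, c) : Root n)) (haβ : IsNeg (rootAct a ((p, q, c) : Root n))) :
    len (mul a (refl p q c)) < len a := by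
  have h1 : IsPos (rootAct (mul a (refl p q c)) ((p, q, c) : Root n)) := by
    rw [rootAct_mul, rootAct_refl_self hpq, rootAct_nroot, isPos_nroot_iff]
    exact haβ
  have h2 := len_lt_of_pos (mul a (refl p q c)) hpq hβ h1
  rwa [mul_refl_refl a hpq c] at h2

lemma step_sign (a : AffW n) {p q : Fin n} {c : ℤ} (hpq : p ≠ q)
    (hlen : len a < len (mul a (refl p q c))) :
    (IsPos ((p, q, c) : Root n) ∧ IsPos (rootAct a ((p, q, c) : Root n))) ∨
    (IsNeg ((p, q, c) : Root n) ∧ IsNeg (rootAct a ((p, q, c) : Root n))) := by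
  have hoff : ((p, q, c) : Root n).1 ≠ ((p, q, c) : Root n).2.1 := hpq
  rcases isPos_or_isNeg hoff with hβ | hβ
  · rcases isPos_or_isNeg (rootAct_fst_ne (a := a) hoff) with ha | ha
    · exact Or.inl ⟨hβ, ha⟩
    · exact absurd hlen (by have := len_gt_of_neg a hpq hβ ha; omega)
  · right
    refine ⟨hβ, ?_⟩
    have hβ' : IsPos ((q, p, -c) : Root n) := hβ
    have hqp : q ≠ p := Ne.symm hpq
    rcases isPos_or_isNeg (rootAct_fst_ne (a := a) hoff) with ha | ha
    · -- then rootAct a (q,p,-c) is negative, giving a length decrease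
      have han : IsNeg (rootAct a ((q, p, -c) : Root n)) := by
        have : ((q, p, -c) : Root n) = nroot (p, q, c) := rfl
        rw [this, rootAct_nroot, isNeg_nroot_iff]
        exact ha
      have := len_gt_of_neg a hqp hβ' han
      rw [refl_comm hpq] at this
      omega
    · exact ha

/-! ### the F-invariant -/

noncomputable def Fsum (lam : Fin n → ℤ) (S : ℤ) : ℤ := ∑ m : Fin n, max 0 (lam m - S)

lemma sum_split_pair (f : Fin n → ℤ) {I J : Fin n} (hIJ : I ≠ J) :
    ∑ m : Fin n, f m = (∑ m ∈ Finset.univ \ {I, J}, f m) + (f I + f J) := by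
  rw [← Finset.sum_sdiff (Finset.subset_univ {I, J}), Finset.sum_pair hIJ]

lemma step_tr_eq {a : AffW n} {p q : Fin n} {c : ℤ} :
    (mul a (refl p q c)).tr = fun m =>
      a.tr m + (if m = a.perm p then -c else if m = a.perm q then c else 0) := by
  funext m
  show (refl p q c).tr (a.perm⁻¹ m) + a.tr m = _
  have h1 : (a.perm⁻¹ m = p) = (m = a.perm p) := by
    simp [Equiv.Perm.inv_def, Equiv.symm_apply_eq]
  have h2 : (a.perm⁻¹ m = q) = (m = a.perm q) := by
    simp [Equiv.Perm.inv_def, Equiv.symm_apply_eq]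
  show (if a.perm⁻¹ m = p then -c else if a.perm⁻¹ m = q then c else 0) + a.tr m = _
  simp only [h1, h2]
  ring

lemma step_Fsum {a b : AffW n} (h : BruhatStep a b) (S : ℤ) :
    Fsum a.tr S ≤ Fsum b.tr S := by
  obtain ⟨⟨p, q, c, hpq, rfl⟩, hlen⟩ := h
  have hIJ : a.perm p ≠ a.perm q := fun hc => hpq (a.perm.injective hc)
  set I := a.perm p with hI
  set J := a.perm q with hJ
  have htr : (mul a (refl p q c)).tr = fun m =>
      a.tr m + (if m = I then -c else if m = J then c else 0) := step_tr_eq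
  have hsign := step_sign a hpq hlen
  have hc : (0 ≤ c ∧ a.tr I - a.tr J ≤ c) ∨ (c ≤ 0 ∧ c ≤ a.tr I - a.tr J) := by
    rcases hsign with ⟨h1, h2⟩ | ⟨h1, h2⟩
    · have h1' : 0 < c ∨ (c = 0 ∧ p < q) := h1
      have h2' : 0 < c - a.tr I + a.tr J ∨
          (c - a.tr I + a.tr J = 0 ∧ I < J) := h2
      rcases h1' with h1' | ⟨h1', _⟩ <;> rcases h2' with h2' | ⟨h2', _⟩ <;> omega
    · have h1' : 0 < -c ∨ (-c = 0 ∧ q < p) := h1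
      have h2' : 0 < -((c : ℤ) - a.tr I + a.tr J) ∨
          (-((c : ℤ) - a.tr I + a.tr J) = 0 ∧ J < I) := h2
      rcases h1' with h1' | ⟨h1', _⟩ <;> rcases h2' with h2' | ⟨h2', _⟩ <;> omega
  unfold Fsum
  rw [htr]
  beta_reduce
  rw [sum_split_pair (fun m => max 0 (a.tr m - S)) hIJ,
    sum_split_pair
      (fun m => max 0 (a.tr m + (if m = I then -c else if m = J then c else 0) - S)) hIJ]
  have hoff : ∑ m ∈ Finset.univ \ {I, J},
      max 0 (a.tr m + (if m = I then -c else if m = J then c else 0) - S)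
      = ∑ m ∈ Finset.univ \ {I, J}, max 0 (a.tr m - S) := by
    apply Finset.sum_congr rfl
    intro m hm
    simp only [Finset.mem_sdiff, Finset.mem_insert, Finset.mem_singleton] at hm
    have hmI : m ≠ I := fun hc => hm.2 (Or.inl hc)
    have hmJ : m ≠ J := fun hc => hm.2 (Or.inr hc)
    rw [if_neg hmI, if_neg hmJ]
    ring_nf
  rw [hoff]
  have hII : (if I = I then -c else if I = J then c else 0) = -c := if_pos rfl
  have hJJ : (if J = I then -c else if J = J then c else 0) = c := by
    rw [if_neg (Ne.symm hIJ), if_pos rfl]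
  rw [hII, hJJ]
  have : max 0 (a.tr I - S) + max 0 (a.tr J - S)
      ≤ max 0 (a.tr I + -c - S) + max 0 (a.tr J + c - S) := by
    rcases hc with ⟨h1, h2⟩ | ⟨h1, h2⟩ <;> omega
  omega

lemma bruhatLe_Fsum {a b : AffW n} (h : BruhatLe a b) (S : ℤ) :
    Fsum a.tr S ≤ Fsum b.tr S := by
  induction h with
  | refl => exact le_refl _
  | tail h1 h2 ih => exact le_trans ih (step_Fsum h2 S)

lemma bruhatLe_len {a b : AffW n} (h : BruhatLe a b) : a = b ∨ len a < len b := by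
  induction h with
  | refl => exact Or.inl rfl
  | tail h1 h2 ih =>
      rcases ih with rfl | ih
      · exact Or.inr h2.2
      · exact Or.inr (lt_trans ih h2.2)

end AffW
namespace AffW
variable {n : ℕ}

/-! ### sorting and the minimal coset representative -/

def key (τ : Fin n → ℤ) (x : Fin n) : ℤ ×ₗ ℕ := toLex (τ x, (x : ℕ))

lemma key_injective (τ : Fin n → ℤ) : Function.Injective (key τ) := by
  intro x y h
  have h2 : ((τ x, (x : ℕ)) : ℤ × ℕ) = (τ y, (y : ℕ)) := toLex.injective h
  have h3 : (x : ℕ) = (y : ℕ) := congrArg Prod.snd h2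
  exact Fin.ext h3

lemma key_lt_iff {τ : Fin n → ℤ} {x y : Fin n} :
    key τ x < key τ y ↔ (τ x < τ y ∨ (τ x = τ y ∧ (x : ℕ) < (y : ℕ))) :=
  Prod.Lex.lt_iff

lemma sorted_unique {τ : Fin n → ℤ} {v w : Equiv.Perm (Fin n)}
    (hv : StrictMono (key τ ∘ ⇑v)) (hw : StrictMono (key τ ∘ ⇑w)) : v = w := by
  have hr : Set.range (key τ ∘ ⇑v) = Set.range (key τ ∘ ⇑w) := by
    rw [Set.range_comp, Set.range_comp, Equiv.range_eq_univ, Equiv.range_eq_univ]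
  have W : WellFoundedLT (Fin n) := inferInstance
  have hfe := (@StrictMono.range_inj (Fin n) (ℤ ×ₗ ℕ) _ _ W _ _ hv hw).1 hr
  exact Equiv.coe_fn_injective (funext fun x => key_injective τ (congrFun hfe x))

lemma key_mono_of_noDesc {τ : Fin n → ℤ} {v : Equiv.Perm (Fin n)}
    (h : ∀ P Q : Fin n, (P : ℕ) + 1 = (Q : ℕ) → key τ (v P) < key τ (v Q)) :
    StrictMono (key τ ∘ ⇑v) := by
  have main : ∀ d : ℕ, ∀ P Q : Fin n, (Q : ℕ) = (P : ℕ) + d + 1 →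
      key τ (v P) < key τ (v Q) := by
    intro d
    induction d with
    | zero => intro P Q h0; exact h P Q (by omega)
    | succ d ih =>
        intro P Q h0
        have hmid : (P : ℕ) + d + 1 < n := by have := Q.isLt; omega
        exact lt_trans (ih P ⟨(P : ℕ) + d + 1, hmid⟩ rfl)
          (h ⟨(P : ℕ) + d + 1, hmid⟩ Q (by simp; omega))
  intro P Q hPQ
  have hlt : (P : ℕ) < (Q : ℕ) := hPQ
  exact main ((Q : ℕ) - (P : ℕ) - 1) P Q (by omega)

def hasDesc (τ : Fin n → ℤ) (v : Equiv.Perm (Fin n)) : Prop :=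
  ∃ P Q : Fin n, (P : ℕ) + 1 = (Q : ℕ) ∧ key τ (v Q) < key τ (v P)

lemma sorted_of_not_hasDesc {τ : Fin n → ℤ} {v : Equiv.Perm (Fin n)}
    (h : ¬ hasDesc τ v) : StrictMono (key τ ∘ ⇑v) := by
  apply key_mono_of_noDesc
  intro P Q hPQ
  have h1 : ¬ key τ (v Q) < key τ (v P) := fun hc => h ⟨P, Q, hPQ, hc⟩
  have hne : P ≠ Q := fun hc => by rw [hc] at hPQ; omega
  refine lt_of_le_of_ne (not_lt.mp h1) ?_
  intro he
  exact hne (v.injective (key_injective τ he))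

lemma desc_step {τ : Fin n → ℤ} {v : Equiv.Perm (Fin n)} {P Q : Fin n}
    (hPQ : (P : ℕ) + 1 = (Q : ℕ)) (hd : key τ (v Q) < key τ (v P)) :
    BruhatStep (⟨v * Equiv.swap P Q, τ⟩ : AffW n) ⟨v, τ⟩ := by
  have hne : P ≠ Q := fun hc => by rw [hc] at hPQ; omega
  have hmul : mul (⟨v, τ⟩ : AffW n) (refl P Q 0) = ⟨v * Equiv.swap P Q, τ⟩ := by
    simp only [mul, refl]
    congr 1
    funext m
    simp only [neg_zero]
    split_ifs <;> ring
  have hPlt : P < Q := by rw [Fin.lt_def]; omega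
  have hβ : IsPos ((P, Q, (0 : ℤ)) : Root n) := Or.inr ⟨rfl, hPlt⟩
  have haβ : IsNeg (rootAct (⟨v, τ⟩ : AffW n) ((P, Q, 0) : Root n)) := by
    show IsPos ((v Q : Fin n), v P, -((0 : ℤ) - τ (v P) + τ (v Q)))
    rw [key_lt_iff] at hd
    rcases hd with hd | ⟨hd1, hd2⟩
    · exact Or.inl (show (0 : ℤ) < -((0 : ℤ) - τ (v P) + τ (v Q)) by omega)
    · exact Or.inr ⟨show -((0 : ℤ) - τ (v P) + τ (v Q)) = 0 by omega, Fin.lt_def.mpr hd2⟩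
  have hlen := len_gt_of_neg (⟨v, τ⟩ : AffW n) hne hβ haβ
  rw [hmul] at hlen
  refine ⟨⟨P, Q, 0, hne, ?_⟩, hlen⟩
  rw [← hmul]
  exact (mul_refl_refl (⟨v, τ⟩ : AffW n) hne 0).symm

lemma minRep_min (τ : Fin n → ℤ) (v : Equiv.Perm (Fin n)) :
    len (minRep τ) ≤ len (⟨v, τ⟩ : AffW n) := by
  have h := (Finset.exists_min_image (Finset.univ : Finset (Equiv.Perm (Fin n)))
      (fun u => len (⟨u, τ⟩ : AffW n)) ⟨1, Finset.mem_univ 1⟩).choose_spec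
  exact h.2 v (Finset.mem_univ v)

lemma minRep_sorted (τ : Fin n → ℤ) : StrictMono (key τ ∘ ⇑((minRep τ).perm)) := by
  apply sorted_of_not_hasDesc
  rintro ⟨P, Q, hPQ, hd⟩
  have hstep := desc_step (τ := τ) (v := (minRep τ).perm) hPQ hd
  have hlt : len (⟨(minRep τ).perm * Equiv.swap P Q, τ⟩ : AffW n) < len (minRep τ) :=
    hstep.2
  have := minRep_min τ ((minRep τ).perm * Equiv.swap P Q)
  omega

lemma minRep_eq_of_sorted {τ : Fin n → ℤ} {v : Equiv.Perm (Fin n)}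
    (hv : StrictMono (key τ ∘ ⇑v)) : minRep τ = (⟨v, τ⟩ : AffW n) := by
  have h := sorted_unique (minRep_sorted τ) hv
  show (⟨(minRep τ).perm, τ⟩ : AffW n) = ⟨v, τ⟩
  rw [h]

lemma minRep_le_coset (τ : Fin n → ℤ) (v : Equiv.Perm (Fin n)) :
    BruhatLe (minRep τ) (⟨v, τ⟩ : AffW n) := by
  classical
  have H : ∀ N : ℕ, ∀ v : Equiv.Perm (Fin n), len (⟨v, τ⟩ : AffW n) ≤ N →
      BruhatLe (minRep τ) (⟨v, τ⟩ : AffW n) := by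
    intro N
    induction N with
    | zero =>
        intro v hlen
        by_cases hd : hasDesc τ v
        · obtain ⟨P, Q, hPQ, hdd⟩ := hd
          have := (desc_step hPQ hdd).2
          omega
        · rw [← minRep_eq_of_sorted (sorted_of_not_hasDesc hd)]
          exact Relation.ReflTransGen.refl
    | succ N ih =>
        intro v hlen
        by_cases hd : hasDesc τ v
        · obtain ⟨P, Q, hPQ, hdd⟩ := hd
          have hstep := desc_step hPQ hdd
          have hle := ih (v * Equiv.swap P Q) (by have := hstep.2; omega)
          exact Relation.ReflTransGen.tail hle hstep
        · rw [← minRep_eq_of_sorted (sorted_of_not_hasDesc hd)]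
          exact Relation.ReflTransGen.refl
  exact H (len ⟨v, τ⟩) v le_rfl

end AffW
namespace AffW
variable {n : ℕ}

/-! ### left multiplication counting -/

lemma mul_invA (a : AffW n) : mul a (invA a) = one n := by
  obtain ⟨u, t⟩ := a
  simp only [mul, invA, one]
  congr 1
  · simp
  · funext m
    simp

lemma rootAct_rootAct_invA (a : AffW n) (γ : Root n) :
    rootAct a (rootAct (invA a) γ) = γ := by
  rw [← rootAct_mul, mul_invA, rootAct_one]

lemma len_mul_perm (w : Equiv.Perm (Fin n)) (a : AffW n) :
    len (mul ⟨w, 0⟩ a)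
        + ({δ | δ ∈ invSet ⟨w, 0⟩ ∧ IsNeg (rootAct (invA a) δ)}).ncard
      = len a + ({δ | δ ∈ invSet ⟨w, 0⟩ ∧ IsPos (rootAct (invA a) δ)}).ncard := by
  classical
  set s : AffW n := ⟨w, 0⟩ with hs
  have hfins := invSet_finite s
  have hfina := invSet_finite a
  have hfinT := invSet_finite (mul s a)
  set Pp : Set (Root n) := {δ | δ ∈ invSet s ∧ IsPos (rootAct (invA a) δ)} with hPp
  set Pm : Set (Root n) := {δ | δ ∈ invSet s ∧ IsNeg (rootAct (invA a) δ)} with hPm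
  set C1 : Set (Root n) :=
    {γ | IsPos γ ∧ IsNeg (rootAct a γ) ∧ IsNeg (rootAct s (rootAct a γ))} with hC1
  set C2 : Set (Root n) :=
    {γ | IsPos γ ∧ IsPos (rootAct a γ) ∧ IsNeg (rootAct s (rootAct a γ))} with hC2
  set E : Set (Root n) :=
    {γ | IsPos γ ∧ IsNeg (rootAct a γ) ∧ IsPos (rootAct s (rootAct a γ))} with hE
  have hsplit : invSet (mul s a) = C1 ∪ C2 := by
    ext γ
    constructor
    · intro h
      obtain ⟨h1, h2⟩ := h
      have hdγ : γ.1 ≠ γ.2.1 := mem_invSet_offdiag ⟨h1, h2⟩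
      rw [rootAct_mul] at h2
      rcases isPos_or_isNeg (rootAct_fst_ne (a := a) hdγ) with hp | hn
      · exact Or.inr ⟨h1, hp, h2⟩
      · exact Or.inl ⟨h1, hn, h2⟩
    · rintro (⟨h1, _, h3⟩ | ⟨h1, _, h3⟩) <;>
        exact ⟨h1, by rw [rootAct_mul]; exact h3⟩
  have hC1sub : C1 ⊆ invSet (mul s a) := by rw [hsplit]; exact Set.subset_union_left
  have hC2sub : C2 ⊆ invSet (mul s a) := by rw [hsplit]; exact Set.subset_union_right
  have hdisj : Disjoint C1 C2 := by
    rw [Set.disjoint_left]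
    rintro γ ⟨_, h2, _⟩ ⟨_, h2', _⟩
    exact not_isPos_and_isNeg h2' h2
  have hEa : E ⊆ invSet a := fun γ h => ⟨h.1, h.2.1⟩
  have hC1E : C1 = invSet a \ E := by
    ext γ
    constructor
    · rintro ⟨h1, h2, h3⟩
      exact ⟨⟨h1, h2⟩, fun hEm => not_isPos_and_isNeg hEm.2.2 h3⟩
    · rintro ⟨⟨h1, h2⟩, hnE⟩
      refine ⟨h1, h2, ?_⟩
      have hdγ : γ.1 ≠ γ.2.1 := mem_invSet_offdiag ⟨h1, h2⟩
      rcases isPos_or_isNeg (rootAct_fst_ne (a := s) (rootAct_fst_ne (a := a) hdγ))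
        with hp | hn
      · exact absurd ⟨h1, h2, hp⟩ hnE
      · exact hn
  -- C2 ≃ Pp via rootAct a
  have himg2 : rootAct a '' C2 = Pp := by
    ext δ
    constructor
    · rintro ⟨γ, ⟨h1, h2, h3⟩, rfl⟩
      refine ⟨⟨h2, h3⟩, ?_⟩
      rw [← rootAct_mul, invA_mul, rootAct_one]
      exact h1
    · rintro ⟨⟨h1, h2⟩, h3⟩
      exact ⟨rootAct (invA a) δ, ⟨h3, by rw [rootAct_rootAct_invA]; exact h1,
        by rw [rootAct_rootAct_invA]; exact h2⟩, rootAct_rootAct_invA a δ⟩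
  -- E ≃ Pm via nroot ∘ rootAct a
  have himgE : (fun γ => nroot (rootAct a γ)) '' E = Pm := by
    ext δ
    constructor
    · rintro ⟨γ, ⟨h1, h2, h3⟩, rfl⟩
      refine ⟨⟨?_, ?_⟩, ?_⟩
      · rw [isPos_nroot_iff]; exact h2
      · rw [rootAct_nroot, isNeg_nroot_iff]; exact h3
      · rw [rootAct_nroot, ← rootAct_mul, invA_mul, rootAct_one, isNeg_nroot_iff]
        exact h1
    · rintro ⟨⟨h1, h2⟩, h3⟩
      refine ⟨nroot (rootAct (invA a) δ), ⟨?_, ?_, ?_⟩, ?_⟩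
      · rw [isPos_nroot_iff]; exact h3
      · rw [rootAct_nroot, rootAct_rootAct_invA, isNeg_nroot_iff]; exact h1
      · rw [rootAct_nroot, rootAct_nroot, rootAct_rootAct_invA, isPos_nroot_iff]
        exact h2
      · show nroot (rootAct a (nroot (rootAct (invA a) δ))) = δ
        rw [rootAct_nroot, nroot_nroot, rootAct_rootAct_invA]
  have hinj2 : Function.Injective (fun γ => nroot (rootAct a γ)) := by
    intro x y h
    simp only at h
    have := congrArg nroot h
    rw [nroot_nroot, nroot_nroot] at this
    exact rootAct_injective a this
  have hcC2 : C2.ncard = Pp.ncard := by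
    rw [← himg2, Set.ncard_image_of_injective _ (rootAct_injective a)]
  have hcE : E.ncard = Pm.ncard := by
    rw [← himgE, Set.ncard_image_of_injective _ hinj2]
  have hsplita : (invSet a \ E).ncard + E.ncard = (invSet a).ncard := by
    have hu : (invSet a \ E) ∪ E = invSet a := Set.diff_union_of_subset hEa
    conv_rhs => rw [← hu]
    rw [Set.ncard_union_eq Set.disjoint_sdiff_left hfina.diff (hfina.subset hEa)]
  have hlen2 : len (mul s a) = C1.ncard + C2.ncard := by
    rw [len_eq, hsplit,
      Set.ncard_union_eq hdisj (hfinT.subset hC1sub) (hfinT.subset hC2sub)]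
  have hlena : len a = (invSet a).ncard := len_eq a
  have hc1 : C1.ncard = (invSet a \ E).ncard := by rw [hC1E]
  omega

/-! ### inversions of a simple-type swap -/

lemma mem_invSet_swap {i j : Fin n} (δ : Root n) :
    δ ∈ invSet (⟨Equiv.swap i j, (0 : Fin n → ℤ)⟩ : AffW n) ↔
      (δ.2.2 = 0 ∧ δ.1 < δ.2.1 ∧ Equiv.swap i j δ.2.1 < Equiv.swap i j δ.1) := by
  obtain ⟨P, Q, K⟩ := δ
  constructor
  · rintro ⟨h1, h2⟩
    have h1' : 0 < K ∨ (K = 0 ∧ P < Q) := h1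
    have h2' : 0 < -(K - (0 : Fin n → ℤ) (Equiv.swap i j P) + (0 : Fin n → ℤ) (Equiv.swap i j Q)) ∨
        (-(K - (0 : Fin n → ℤ) (Equiv.swap i j P) + (0 : Fin n → ℤ) (Equiv.swap i j Q)) = 0
          ∧ Equiv.swap i j Q < Equiv.swap i j P) := h2
    simp only [Pi.zero_apply] at h2'
    rcases h1' with h1' | ⟨h1', h1''⟩ <;> rcases h2' with h2' | ⟨h2', h2''⟩ <;>
      first
        | (exfalso; omega)
        | exact ⟨h1', h1'', h2''⟩
  · rintro ⟨h1, h2, h3⟩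
    simp only at h1 h2 h3
    refine ⟨Or.inr ⟨h1, h2⟩, ?_⟩
    show IsPos (Equiv.swap i j Q, Equiv.swap i j P,
      -(K - (0 : Fin n → ℤ) (Equiv.swap i j P) + (0 : Fin n → ℤ) (Equiv.swap i j Q)))
    refine Or.inr ⟨?_, h3⟩
    simp only [Pi.zero_apply]
    omega

lemma swap_inversion {i j P Q : Fin n} (hij : i < j) (h2 : P < Q)
    (h3 : Equiv.swap i j Q < Equiv.swap i j P) :
    (P = i ∧ i < Q ∧ Q ≤ j) ∨ (i ≤ P ∧ P < j ∧ Q = j) := by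
  rcases eq_or_ne i P with rfl | hPi
  · left
    refine ⟨rfl, h2, ?_⟩
    by_contra hQj
    have hQj' : j < Q := lt_of_not_ge hQj
    have hQi : Q ≠ i := ne_of_gt h2
    have hQjne : Q ≠ j := ne_of_gt hQj'
    rw [Equiv.swap_apply_left, Equiv.swap_apply_of_ne_of_ne hQi hQjne] at h3
    exact absurd (lt_trans hQj' h3) (lt_irrefl j)
  · right
    rcases eq_or_ne j Q with rfl | hQj
    · refine ⟨?_, h2, rfl⟩
      by_contra hiP
      have hPi' : P < i := lt_of_not_ge hiP
      have hPj : P ≠ j := ne_of_lt h2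
      rw [Equiv.swap_apply_right, Equiv.swap_apply_of_ne_of_ne (Ne.symm hPi) hPj] at h3
      exact absurd (lt_trans h3 hPi') (lt_irrefl i)
    · exfalso
      rcases eq_or_ne i Q with rfl | hQi
      · have hPj : P ≠ j := ne_of_lt (lt_trans h2 hij)
        rw [Equiv.swap_apply_left, Equiv.swap_apply_of_ne_of_ne (Ne.symm hPi) hPj] at h3
        exact absurd (lt_trans (lt_trans h2 hij) h3) (lt_irrefl P)
      · rcases eq_or_ne j P with rfl | hPj
        · rw [Equiv.swap_apply_right,
            Equiv.swap_apply_of_ne_of_ne (Ne.symm hQi) (Ne.symm hQj)] at h3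
          exact absurd (lt_trans hij (lt_trans h2 h3)) (lt_irrefl i)
        · rw [Equiv.swap_apply_of_ne_of_ne (Ne.symm hQi) (Ne.symm hQj),
            Equiv.swap_apply_of_ne_of_ne (Ne.symm hPi) (Ne.symm hPj)] at h3
          exact absurd (lt_trans h2 h3) (lt_irrefl P)

lemma swap_inversion' {i j P Q : Fin n} (hij : i < j)
    (h : (P = i ∧ i < Q ∧ Q ≤ j) ∨ (i ≤ P ∧ P < j ∧ Q = j)) :
    P < Q ∧ Equiv.swap i j Q < Equiv.swap i j P := by
  rcases h with ⟨hPi, h1, h2⟩ | ⟨h1, h2, hQj⟩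
  · subst hPi
    refine ⟨h1, ?_⟩
    rw [Equiv.swap_apply_left]
    rcases eq_or_ne j Q with rfl | hQj
    · rw [Equiv.swap_apply_right]
      exact hij
    · rw [Equiv.swap_apply_of_ne_of_ne (ne_of_gt h1) (Ne.symm hQj)]
      exact lt_of_le_of_ne h2 (Ne.symm hQj)
  · subst hQj
    refine ⟨h2, ?_⟩
    rw [Equiv.swap_apply_right]
    rcases eq_or_ne i P with rfl | hPi
    · rw [Equiv.swap_apply_left]
      exact hij
    · rw [Equiv.swap_apply_of_ne_of_ne (Ne.symm hPi) (ne_of_lt h2)]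
      exact lt_of_le_of_ne h1 hPi

end AffW
namespace AffW
variable {n : ℕ}

lemma minRep_inv_lt (τ : Fin n → ℤ) {x y : Fin n} (h : key τ x < key τ y) :
    (minRep τ).perm⁻¹ x < (minRep τ).perm⁻¹ y := by
  have hs := minRep_sorted τ
  rcases lt_trichotomy ((minRep τ).perm⁻¹ x) ((minRep τ).perm⁻¹ y) with h' | h' | h'
  · exact h'
  · exfalso
    have hxy : x = y := by
      have := congrArg (⇑(minRep τ).perm) h'
      rwa [Equiv.Perm.apply_inv_self, Equiv.Perm.apply_inv_self] at this
    rw [hxy] at h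
    exact lt_irrefl _ h
  · exfalso
    have h2 := hs h'
    simp only [Function.comp_apply, Equiv.Perm.apply_inv_self] at h2
    exact absurd (lt_trans h h2) (lt_irrefl _)

lemma rootAct_invA_minRep (τ : Fin n → ℤ) (P Q : Fin n) :
    rootAct (invA (minRep τ)) ((P, Q, 0) : Root n)
      = ((minRep τ).perm⁻¹ P, (minRep τ).perm⁻¹ Q, τ P - τ Q) := by
  show ((minRep τ).perm⁻¹ P, (minRep τ).perm⁻¹ Q,
    (0 : ℤ) - (-((minRep τ).tr ((minRep τ).perm ((minRep τ).perm⁻¹ P))))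
      + (-((minRep τ).tr ((minRep τ).perm ((minRep τ).perm⁻¹ Q))))) = _
  rw [Equiv.Perm.apply_inv_self, Equiv.Perm.apply_inv_self]
  refine Prod.ext rfl (Prod.ext rfl ?_)
  show (0 : ℤ) - -τ P + -τ Q = τ P - τ Q
  ring

lemma isPos_invA_minRep (τ : Fin n → ℤ) {P Q : Fin n} (hPQ : P < Q) :
    IsPos (rootAct (invA (minRep τ)) ((P, Q, 0) : Root n)) ↔ τ Q ≤ τ P := by
  rw [rootAct_invA_minRep]
  constructor
  · rintro (h | ⟨h, _⟩) <;> simp only at h <;> omega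
  · intro h
    rcases lt_or_eq_of_le h with h' | h'
    · exact Or.inl (show (0 : ℤ) < τ P - τ Q by omega)
    · refine Or.inr ⟨show τ P - τ Q = 0 by omega, ?_⟩
      apply minRep_inv_lt
      rw [key_lt_iff]
      exact Or.inr ⟨h'.symm, Fin.lt_def.mp hPQ⟩

lemma isNeg_invA_minRep (τ : Fin n → ℤ) {P Q : Fin n} (hPQ : P < Q) :
    IsNeg (rootAct (invA (minRep τ)) ((P, Q, 0) : Root n)) ↔ τ P < τ Q := by
  have hoff : ((P, Q, (0:ℤ)) : Root n).1 ≠ ((P, Q, (0:ℤ)) : Root n).2.1 := ne_of_lt hPQ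
  have hoff2 := rootAct_fst_ne (a := invA (minRep τ)) hoff
  constructor
  · intro h
    by_contra hc
    push_neg at hc
    exact not_isPos_and_isNeg ((isPos_invA_minRep τ hPQ).mpr hc) h
  · intro h
    refine isNeg_of_not_isPos hoff2 ?_
    intro hp
    have := (isPos_invA_minRep τ hPQ).mp hp
    omega

/-! ### the same-orbit strict length comparison -/

lemma len_minRep_swap_lt (η : Fin n → ℤ) {i j : Fin n} (hij : i < j) (hN : η j < η i) :
    len (minRep η) < len (minRep (fun m => η (Equiv.swap i j m))) := by
  classical
  set τ : Fin n → ℤ := fun m => η (Equiv.swap i j m) with hτdef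
  have hτi : τ i = η j := by simp [hτdef, Equiv.swap_apply_left]
  have hτj : τ j = η i := by simp [hτdef, Equiv.swap_apply_right]
  have hτlt : τ i < τ j := by omega
  have hijne : i ≠ j := ne_of_lt hij
  have hmulS : mul (⟨Equiv.swap i j, 0⟩ : AffW n) (minRep τ)
      = ⟨Equiv.swap i j * (minRep τ).perm, η⟩ := by
    simp only [mul]
    congr 1
    funext m
    show (minRep τ).tr ((Equiv.swap i j)⁻¹ m) + (0 : Fin n → ℤ) m = η m
    have hatr : (minRep τ).tr = τ := rfl
    rw [hatr, Equiv.swap_inv]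
    show η (Equiv.swap i j (Equiv.swap i j m)) + 0 = η m
    rw [Equiv.swap_apply_self]
    ring
  have hminle : len (minRep η)
      ≤ len (mul (⟨Equiv.swap i j, 0⟩ : AffW n) (minRep τ)) := by
    rw [hmulS]
    exact minRep_min η _
  have hcount := len_mul_perm (Equiv.swap i j) (minRep τ)
  set Pp : Set (Root n) :=
    {δ | δ ∈ invSet ⟨Equiv.swap i j, 0⟩ ∧ IsPos (rootAct (invA (minRep τ)) δ)} with hPp
  set Pm : Set (Root n) :=
    {δ | δ ∈ invSet ⟨Equiv.swap i j, 0⟩ ∧ IsNeg (rootAct (invA (minRep τ)) δ)} with hPm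
  have hfins := invSet_finite (⟨Equiv.swap i j, 0⟩ : AffW n)
  have hPpfin : Pp.Finite := hfins.subset fun δ h => h.1
  have hPmfin : Pm.Finite := hfins.subset fun δ h => h.1
  set ι : Root n → Root n := fun δ => if δ.1 = i then (δ.2.1, j, (0:ℤ)) else (i, δ.1, (0:ℤ))
    with hι
  have hmem : ∀ δ ∈ Pp, (δ.2.2 = 0 ∧
      ((δ.1 = i ∧ i < δ.2.1 ∧ δ.2.1 < j) ∨ (i < δ.1 ∧ δ.1 < j ∧ δ.2.1 = j))) := by
    rintro ⟨P, Q, K⟩ ⟨hmem, hsign⟩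
    rw [mem_invSet_swap] at hmem
    obtain ⟨hK, hPQ, hswp⟩ := hmem
    simp only at hK hPQ hswp hsign ⊢
    subst hK
    rcases swap_inversion hij hPQ hswp with ⟨hPi, h1, h2⟩ | ⟨h1, h2, hQj⟩
    · have hs := (isPos_invA_minRep τ hPQ).mp hsign
      refine ⟨rfl, Or.inl ⟨hPi, h1, ?_⟩⟩
      rcases lt_or_eq_of_le h2 with h' | h'
      · exact h'
      · exfalso
        rw [h', hPi] at hs
        omega
    · have hs := (isPos_invA_minRep τ hPQ).mp hsign
      refine ⟨rfl, Or.inr ⟨?_, h2, hQj⟩⟩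
      rcases lt_or_eq_of_le h1 with h' | h'
      · exact h'
      · exfalso
        rw [← h', hQj] at hs
        omega
  have hιPm : ∀ δ ∈ Pp, ι δ ∈ Pm := by
    rintro ⟨P, Q, K⟩ hδ
    obtain ⟨hK, hcl⟩ := hmem _ hδ
    simp only at hK
    subst hK
    rcases hcl with ⟨hPi, h1, h2⟩ | ⟨h1, h2, hQj⟩
    · simp only at hPi h1 h2
      have hPQ : P < Q := by rw [hPi]; exact h1
      have hιδ : ι (P, Q, (0:ℤ)) = (Q, j, (0:ℤ)) := by simp [hι, hPi]
      rw [hιδ]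
      constructor
      · rw [mem_invSet_swap]
        have hsw := swap_inversion' hij (Or.inr ⟨le_of_lt h1, h2, rfl⟩)
        exact ⟨rfl, hsw.1, hsw.2⟩
      · rw [isNeg_invA_minRep τ h2]
        have hs : τ Q ≤ τ P := by
          have h6 := hδ.2
          rwa [isPos_invA_minRep τ hPQ] at h6
        rw [hPi] at hs
        omega
    · simp only at h1 h2 hQj
      have hPQ : P < Q := by rw [hQj]; exact h2
      have hPine : P ≠ i := ne_of_gt h1
      have hιδ : ι (P, Q, (0:ℤ)) = (i, P, (0:ℤ)) := by simp [hι, hPine]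
      rw [hιδ]
      constructor
      · rw [mem_invSet_swap]
        have hsw := swap_inversion' hij (Or.inl ⟨rfl, h1, le_of_lt h2⟩)
        exact ⟨rfl, hsw.1, hsw.2⟩
      · rw [isNeg_invA_minRep τ h1]
        have hs : τ j ≤ τ P := by
          have h6 := hδ.2
          rw [isPos_invA_minRep τ hPQ] at h6
          rwa [hQj] at h6
        omega
  have hijmem : ((i, j, (0:ℤ)) : Root n) ∈ Pm := by
    constructor
    · rw [mem_invSet_swap]
      have hsw := swap_inversion' hij (Or.inl ⟨rfl, hij, le_refl j⟩)
      exact ⟨rfl, hsw.1, hsw.2⟩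
    · rw [isNeg_invA_minRep τ hij]
      exact hτlt
  have hijnotin : ((i, j, (0:ℤ)) : Root n) ∉ ι '' Pp := by
    rintro ⟨δ, hδ, hfix⟩
    obtain ⟨hK, hcl⟩ := hmem _ hδ
    rcases hcl with ⟨hPi, h1, h2⟩ | ⟨h1, h2, hQj⟩
    · have he : ι δ = (δ.2.1, j, (0:ℤ)) := by simp [hι, hPi]
      rw [he] at hfix
      have h5 : δ.2.1 = i := congrArg (fun x : Root n => x.1) hfix
      rw [h5] at h1
      exact lt_irrefl _ h1
    · have hne : δ.1 ≠ i := ne_of_gt h1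
      have he : ι δ = (i, δ.1, (0:ℤ)) := by simp [hι, hne]
      rw [he] at hfix
      have h5 : δ.1 = j := congrArg (fun x => x.2.1) hfix
      rw [h5] at h2
      exact lt_irrefl _ h2
  have hinj : Set.InjOn ι Pp := by
    rintro δ hδ δ' hδ' heq
    obtain ⟨hK, hcl⟩ := hmem _ hδ
    obtain ⟨hK', hcl'⟩ := hmem _ hδ'
    have hδeta : δ = (δ.1, δ.2.1, δ.2.2) := rfl
    have hδ'eta : δ' = (δ'.1, δ'.2.1, δ'.2.2) := rfl
    by_cases h1 : δ.1 = i <;> by_cases h2 : δ'.1 = i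
    · have e1 : ι δ = (δ.2.1, j, (0:ℤ)) := by simp [hι, h1]
      have e2 : ι δ' = (δ'.2.1, j, (0:ℤ)) := by simp [hι, h2]
      rw [e1, e2] at heq
      have h3 : δ.2.1 = δ'.2.1 := congrArg (fun x : Root n => x.1) heq
      rw [hδeta, hδ'eta, h1, h2, h3, hK, hK']
    · have e1 : ι δ = (δ.2.1, j, (0:ℤ)) := by simp [hι, h1]
      have e2 : ι δ' = (i, δ'.1, (0:ℤ)) := by simp [hι, h2]
      rw [e1, e2] at heq
      have hx : δ.2.1 = i := congrArg (fun x : Root n => x.1) heq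
      rcases hcl with ⟨_, hlt, _⟩ | ⟨_, _, hj⟩
      · rw [hx] at hlt
        exact absurd hlt (lt_irrefl i)
      · rw [hj] at hx
        rw [hx] at hij
        exact absurd hij (lt_irrefl i)
    · have e1 : ι δ = (i, δ.1, (0:ℤ)) := by simp [hι, h1]
      have e2 : ι δ' = (δ'.2.1, j, (0:ℤ)) := by simp [hι, h2]
      rw [e1, e2] at heq
      have hx : δ'.2.1 = i := (congrArg (fun x : Root n => x.1) heq).symm
      rcases hcl' with ⟨_, hlt, _⟩ | ⟨_, _, hj⟩
      · rw [hx] at hlt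
        exact absurd hlt (lt_irrefl i)
      · rw [hj] at hx
        rw [hx] at hij
        exact absurd hij (lt_irrefl i)
    · have e1 : ι δ = (i, δ.1, (0:ℤ)) := by simp [hι, h1]
      have e2 : ι δ' = (i, δ'.1, (0:ℤ)) := by simp [hι, h2]
      rw [e1, e2] at heq
      have hx : δ.1 = δ'.1 := congrArg (fun x => x.2.1) heq
      rcases hcl with ⟨hc, _, _⟩ | ⟨_, _, hj⟩
      · exact absurd hc h1
      · rcases hcl' with ⟨hc', _, _⟩ | ⟨_, _, hj'⟩
        · exact absurd hc' h2
        · rw [hδeta, hδ'eta, hx, hj, hj', hK, hK']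
  have hmb : Pp.ncard + 1 ≤ Pm.ncard := by
    have hsub : ι '' Pp ∪ {((i, j, (0:ℤ)) : Root n)} ⊆ Pm := by
      rw [Set.union_subset_iff]
      constructor
      · rintro δ ⟨γ, hγ, rfl⟩
        exact hιPm γ hγ
      · simpa using hijmem
    have hcard : (ι '' Pp ∪ {((i, j, (0:ℤ)) : Root n)}).ncard = Pp.ncard + 1 := by
      rw [Set.ncard_union_eq (Set.disjoint_singleton_right.mpr hijnotin)
        (hPpfin.image ι) (Set.finite_singleton _),
        Set.ncard_image_of_injOn hinj, Set.ncard_singleton]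
    rw [← hcard]
    exact Set.ncard_le_ncard hsub hPmfin
  omega

end AffW
namespace AffW
variable {n : ℕ}

/-- The string characterization of the Bruhat order on `X`. -/
lemma char (τ η : Fin n → ℤ) (i j : Fin n) (k : ℤ) (hij : i < j)
    (hline : τ = fun m => η m - k * ((if m = i then 1 else 0) - (if m = j then 1 else 0))) :
    XLe τ η ↔ ((0 ≤ k ∧ k < η i - η j) ∨ (η i - η j ≤ k ∧ k ≤ 0)) := by
  have hijne : i ≠ j := ne_of_lt hij
  have hτi : τ i = η i - k := by
    rw [hline]
    simp [hijne]
  have hτj : τ j = η j + k := by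
    rw [hline]
    simp [Ne.symm hijne]
  have hτm : ∀ m, m ≠ i → m ≠ j → τ m = η m := by
    intro m h1 h2
    rw [hline]
    simp [h1, h2]
  constructor
  · intro hxle
    have hF : ∀ S, Fsum τ S ≤ Fsum η S := fun S => bruhatLe_Fsum hxle S
    have hFS : ∀ S : ℤ, max 0 (τ i - S) + max 0 (τ j - S)
        ≤ max 0 (η i - S) + max 0 (η j - S) := by
      intro S
      have h1 := hF S
      unfold Fsum at h1
      rw [sum_split_pair (fun m => max 0 (τ m - S)) hijne,
        sum_split_pair (fun m => max 0 (η m - S)) hijne] at h1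
      have hoff : ∑ m ∈ Finset.univ \ {i, j}, max 0 (τ m - S)
          = ∑ m ∈ Finset.univ \ {i, j}, max 0 (η m - S) := by
        apply Finset.sum_congr rfl
        intro m hm
        simp only [Finset.mem_sdiff, Finset.mem_insert, Finset.mem_singleton] at hm
        rw [hτm m (fun hc => hm.2 (Or.inl hc)) (fun hc => hm.2 (Or.inr hc))]
      omega
    rcases lt_trichotomy k 0 with hk | hk | hk
    · rcases le_or_gt (η i - η j) k with hN | hN
      · exact Or.inr ⟨hN, le_of_lt hk⟩
      · exfalso
        rcases lt_or_ge 0 (η i - η j) with hNpos | hNnp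
        · have h := hFS (η i)
          rw [hτi, hτj] at h
          omega
        · have h := hFS (η j)
          rw [hτi, hτj] at h
          omega
    · subst hk
      rcases lt_or_ge 0 (η i - η j) with h | h
      · exact Or.inl ⟨le_refl 0, h⟩
      · exact Or.inr ⟨h, le_refl 0⟩
    · rcases lt_or_ge k (η i - η j) with hN | hN
      · exact Or.inl ⟨le_of_lt hk, hN⟩
      · exfalso
        rcases lt_or_ge (η i - η j) k with hNk | hNk
        · rcases lt_or_ge 0 (η i - η j) with hNpos | hNnp
          · have h := hFS (η i)
            rw [hτi, hτj] at h
            omega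
          · have h := hFS (η j)
            rw [hτi, hτj] at h
            omega
        · have hkN : k = η i - η j := le_antisymm hNk hN
          have hNpos : η j < η i := by omega
          have hτη : τ = fun m => η (Equiv.swap i j m) := by
            funext m
            rcases eq_or_ne m i with rfl | h1
            · rw [hτi, hkN, Equiv.swap_apply_left]
              ring
            · rcases eq_or_ne m j with rfl | h2
              · rw [hτj, hkN, Equiv.swap_apply_right]
                ring
              · rw [hτm m h1 h2, Equiv.swap_apply_of_ne_of_ne h1 h2]
          have hlt := len_minRep_swap_lt η hij hNpos
          rw [← hτη] at hlt
          rcases bruhatLe_len hxle with heq | hlen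
          · have hteq : τ = η := congrArg AffW.tr heq
            have h5 : τ i = η i := by rw [hteq]
            omega
          · omega
  · intro hrange
    rcases eq_or_ne k 0 with rfl | hk0
    · have hτη : τ = η := by
        funext m
        rw [hline]
        ring
      show BruhatLe (minRep τ) (minRep η)
      rw [hτη]
      exact Relation.ReflTransGen.refl
    · have hpq : (minRep η).perm⁻¹ i ≠ (minRep η).perm⁻¹ j := by
        intro hc
        apply hijne
        have h5 := congrArg (⇑(minRep η).perm) hc
        rwa [Equiv.Perm.apply_inv_self, Equiv.Perm.apply_inv_self] at h5
      set p := (minRep η).perm⁻¹ i with hp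
      set q := (minRep η).perm⁻¹ j with hq
      have hroot : rootAct (minRep η) ((p, q, k) : Root n) = (i, j, k - η i + η j) := by
        show ((minRep η).perm p, (minRep η).perm q,
          k - (minRep η).tr ((minRep η).perm p) + (minRep η).tr ((minRep η).perm q)) = _
        rw [hp, hq, Equiv.Perm.apply_inv_self, Equiv.Perm.apply_inv_self]
        rfl
      have hlt : len (mul (minRep η) (refl p q k)) < len (minRep η) := by
        rcases lt_trichotomy k 0 with hk | hk | hk
        · have hN : η i - η j ≤ k := by
            rcases hrange with ⟨h1, h2⟩ | ⟨h1, h2⟩ <;> omega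
          have hqp : q ≠ p := Ne.symm hpq
          have hβ : IsPos ((q, p, -k) : Root n) := Or.inl (show (0:ℤ) < -k by omega)
          have haβ : IsNeg (rootAct (minRep η) ((q, p, -k) : Root n)) := by
            have h6 : ((q, p, -k) : Root n) = nroot (p, q, k) := rfl
            rw [h6, rootAct_nroot, hroot, isNeg_nroot_iff]
            rcases lt_or_eq_of_le hN with h | h
            · exact Or.inl (show (0:ℤ) < k - η i + η j by omega)
            · exact Or.inr ⟨show k - η i + η j = 0 by omega, hij⟩
          have h7 := len_gt_of_neg (minRep η) hqp hβ haβ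
          rwa [refl_comm hpq k] at h7
        · exact absurd hk hk0
        · have hN : k < η i - η j := by
            rcases hrange with ⟨h1, h2⟩ | ⟨h1, h2⟩ <;> omega
          have hβ : IsPos ((p, q, k) : Root n) := Or.inl hk
          have haβ : IsNeg (rootAct (minRep η) ((p, q, k) : Root n)) := by
            rw [hroot]
            show IsPos ((j : Fin n), (i : Fin n), -(k - η i + η j))
            exact Or.inl (show (0:ℤ) < -(k - η i + η j) by omega)
          exact len_gt_of_neg (minRep η) hpq hβ haβ
      have htrx : (mul (minRep η) (refl p q k)).tr = τ := by
        funext m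
        show (refl p q k).tr ((minRep η).perm⁻¹ m) + (minRep η).tr m = τ m
        have h1 : ((minRep η).perm⁻¹ m = p) = (m = i) := by
          rw [hp]
          exact propext (Equiv.injective _).eq_iff
        have h2 : ((minRep η).perm⁻¹ m = q) = (m = j) := by
          rw [hq]
          exact propext (Equiv.injective _).eq_iff
        show (if (minRep η).perm⁻¹ m = p then -k else if (minRep η).perm⁻¹ m = q then k else 0)
          + η m = τ m
        simp only [h1, h2]
        rw [hline]
        rcases eq_or_ne m i with rfl | hmi
        · simp only [if_pos rfl, if_neg hijne, if_true, if_false]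
          ring_nf
          try simp [hijne]
          try ring
        · rcases eq_or_ne m j with rfl | hmj
          · simp [hmi, Ne.symm hijne]
            try ring
          · simp [hmi, hmj]
            try ring
      have hx : mul (minRep η) (refl p q k)
          = ⟨(mul (minRep η) (refl p q k)).perm, τ⟩ := by
        rw [← htrx]
      have hstep : BruhatStep (mul (minRep η) (refl p q k)) (minRep η) :=
        ⟨⟨p, q, k, hpq, (mul_refl_refl (minRep η) hpq k).symm⟩, hlt⟩
      have hle1 : BruhatLe (minRep τ) (mul (minRep η) (refl p q k)) := by
        rw [hx]
        exact minRep_le_coset τ _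
      exact Relation.ReflTransGen.tail hle1 hstep

end AffW
open AffW in
/-- Let `α = ε_i - ε_j` (`i < j`) be a positive root of `Sₙ`, `τ, η ∈ ℤⁿ` with
`η - τ ∈ ℤ α^∨`, and `w ∈ Sₙ` with `wα > 0` (i.e. `w(i) < w(j)`).  Then
`τ ≤ η` in the Bruhat order on `ℤⁿ` iff `wτ ≤ wη`. -/
theorem bruhat_string_lemma (n : ℕ) (τ η : Fin n → ℤ) (w : Equiv.Perm (Fin n))
    (i j : Fin n) (k : ℤ) (hij : i < j) (hw : w i < w j)
    (hline : τ = fun m => η m - k * ((if m = i then 1 else 0) - (if m = j then 1 else 0))) :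
    XLe τ η ↔ XLe (fun m => τ (w⁻¹ m)) (fun m => η (w⁻¹ m)) := by
  have hline' : (fun m => τ (w⁻¹ m)) = fun m => (fun m' => η (w⁻¹ m')) m
      - k * ((if m = w i then 1 else 0) - (if m = w j then 1 else 0)) := by
    funext m
    have h1 : (w⁻¹ m = i) = (m = w i) := by
      simp [Equiv.Perm.inv_def, Equiv.symm_apply_eq]
    have h2 : (w⁻¹ m = j) = (m = w j) := by
      simp [Equiv.Perm.inv_def, Equiv.symm_apply_eq]
    rw [hline]
    simp only [h1, h2]
  rw [AffW.char τ η i j k hij hline,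
    AffW.char (fun m => τ (w⁻¹ m)) (fun m => η (w⁻¹ m)) (w i) (w j) k hw hline']
  simp only [Equiv.Perm.inv_apply_self]
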